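/- Let f be continuous on [0,∞), analytic on (0,∞), with f(0) > 0, f(s) = f(0) + a_k s^k + O(s^{k+1}) near 0 with a_k > 0 and k > 0, and f'(s) > 0 for s > 0; let g(s) = b_j s^j + O(s^{j+1}) near 0 with b_j > 0, j > −1, g continuous and positive on (0,∞), and ∫^∞ g/f² ds < ∞. Then L(s₀) = 2∫_{s₀}^∞ (g/f)·f(s₀)/√(f² − f(s₀)²) ds tends to +∞ as s₀ → 0⁺. (Near s₀ → 0 the integrand behaves like b_j s^j f(0)/√(2 f(0) a_k (s^k − s₀^k)), whose integral over (s₀, δ) diverges like s₀^{j+1−k/2} if k > 2(j+1) or like log(1/s₀) if k = 2(j+1).) -/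

import Mathlib

open Real Filter MeasureTheory Asymptotics

open Set in
set_option maxHeartbeats 1600000 in
/-- In the confining case `f(0) > 0`, with `f(s) = f(0) + a_k s^k + O(s^{k+1})`
and `g(s) = b_j s^j + O(s^{j+1})` near `0`, `k ≥ 2(j+1)`, the separation
`L(s₀) = 2∫_{s₀}^∞ (g/f)·f(s₀)/√(f²−f(s₀)²) ds` tends to `+∞` as `s₀ → 0⁺`. -/
theorem separation_diverges_confining_case
    (f g : ℝ → ℝ) (ak bj k j : ℝ)
    (hf_cont : ContinuousOn f (Set.Ici 0))
    (hf_anal : AnalyticOn ℝ f (Set.Ioi 0))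
    (hf0 : 0 < f 0) (hak : 0 < ak) (hk : 0 < k)
    (hf_exp : (fun s => f s - f 0 - ak * s ^ k)
      =O[nhdsWithin 0 (Set.Ioi 0)] (fun s => s ^ (k + 1)))
    (hf_deriv : ∀ s > (0:ℝ), 0 < deriv f s)
    (hg_cont : ContinuousOn g (Set.Ioi 0))
    (hg_pos : ∀ s > (0:ℝ), 0 < g s)
    (hbj : 0 < bj) (hj : -1 < j)
    (hg_exp : (fun s => g s - bj * s ^ j)
      =O[nhdsWithin 0 (Set.Ioi 0)] (fun s => s ^ (j + 1)))
    (htail : IntegrableOn (fun s => g s / (f s) ^ 2) (Set.Ioi 1))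
    (hkj : 2 * (j + 1) ≤ k) :
    Tendsto
      (fun s₀ => 2 * ∫ s in Set.Ioi s₀,
        (g s / f s) * (f s₀ / Real.sqrt ((f s) ^ 2 - (f s₀) ^ 2)))
      (nhdsWithin 0 (Set.Ioi 0)) atTop := by
  -- monotonicity and positivity of f
  have hmono : StrictMonoOn f (Set.Ici 0) := by
    apply strictMonoOn_of_deriv_pos (convex_Ici 0) hf_cont
    intro x hx
    rw [interior_Ici] at hx
    exact hf_deriv x hx
  have hf0le : ∀ s : ℝ, 0 ≤ s → f 0 ≤ f s := by
    intro s hs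
    rcases eq_or_lt_of_le hs with h | h
    · rw [← h]
    · exact (hmono self_mem_Ici hs h).le
  have hfpos : ∀ s : ℝ, 0 ≤ s → 0 < f s := fun s hs => lt_of_lt_of_le hf0 (hf0le s hs)
  have hanal : AnalyticOnNhd ℝ f (Set.Ioi 0) := (isOpen_Ioi.analyticOn_iff_analyticOnNhd).mp hf_anal
  have hderiv_cont : ContinuousOn (deriv f) (Set.Ioi 0) := hanal.deriv.continuousOn
  -- eventual bounds near 0
  obtain ⟨Cf, hCf, hCfb⟩ := hf_exp.exists_pos
  obtain ⟨Cg, hCg, hCgb⟩ := hg_exp.exists_pos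
  have hid : Tendsto (fun s : ℝ => s) (nhdsWithin 0 (Set.Ioi 0)) (nhds 0) :=
    tendsto_id.mono_left nhdsWithin_le_nhds
  have hsmall1 : ∀ᶠ s in nhdsWithin 0 (Set.Ioi 0), s < ak / Cf :=
    hid.eventually_lt_const (by positivity)
  have hsmall2 : ∀ᶠ s in nhdsWithin 0 (Set.Ioi 0), s < (bj / 2) / Cg :=
    hid.eventually_lt_const (by positivity)
  have hftend : Tendsto f (nhdsWithin 0 (Set.Ioi 0)) (nhds (f 0)) :=
    (hf_cont 0 self_mem_Ici).mono_left (nhdsWithin_mono 0 Ioi_subset_Ici_self)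
  have hflt : ∀ᶠ s in nhdsWithin 0 (Set.Ioi 0), f s < 2 * f 0 :=
    hftend.eventually_lt_const (by linarith)
  have hP : ∀ᶠ s in nhdsWithin 0 (Set.Ioi 0),
      f s - f 0 ≤ 2 * ak * s ^ k ∧ bj / 2 * s ^ j ≤ g s ∧ f s < 2 * f 0 := by
    filter_upwards [hCfb.bound, hCgb.bound, hsmall1, hsmall2, hflt,
      eventually_mem_nhdsWithin] with s h1 h2 h3 h4 h5 h6
    have hs : (0:ℝ) < s := h6
    have hskpos : (0:ℝ) < s ^ k := rpow_pos_of_pos hs k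
    have hsjpos : (0:ℝ) < s ^ j := rpow_pos_of_pos hs j
    refine ⟨?_, ?_, h5⟩
    · have hn : ‖s ^ (k+1)‖ = s * s ^ k := by
        rw [Real.norm_eq_abs, abs_of_pos (rpow_pos_of_pos hs _), Real.rpow_add hs,
          Real.rpow_one]; ring
      rw [hn, Real.norm_eq_abs] at h1
      have h1' := (abs_le.mp h1).2
      have hCs : Cf * s ≤ ak := by
        have := (lt_div_iff₀ hCf).mp h3
        nlinarith
      nlinarith
    · have hn : ‖s ^ (j+1)‖ = s * s ^ j := by
        rw [Real.norm_eq_abs, abs_of_pos (rpow_pos_of_pos hs _), Real.rpow_add hs,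
          Real.rpow_one]; ring
      rw [hn, Real.norm_eq_abs] at h2
      have h2' := (abs_le.mp h2).1
      have hCs : Cg * s ≤ bj / 2 := by
        have := (lt_div_iff₀ hCg).mp h4
        nlinarith
      nlinarith
  rw [eventually_nhdsWithin_iff, Metric.eventually_nhds_iff] at hP
  obtain ⟨ε, hε, hPε⟩ := hP
  set δ : ℝ := min (ε / 2) 1 with hδdef
  have hδpos : 0 < δ := lt_min (by linarith) one_pos
  have hδ1 : δ ≤ 1 := min_le_right _ _
  have hδε : δ < ε := lt_of_le_of_lt (min_le_left _ _) (by linarith)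
  have hPδ : ∀ s : ℝ, 0 < s → s < δ →
      f s - f 0 ≤ 2 * ak * s ^ k ∧ bj / 2 * s ^ j ≤ g s ∧ f s < 2 * f 0 := by
    intro s hs hsδ
    have hd : dist s 0 < ε := by
      rw [Real.dist_eq, sub_zero, abs_of_pos hs]; linarith
    exact hPε hd hs
  set c : ℝ := bj / (4 * Real.sqrt (6 * ak * f 0)) with hc
  have h6ak : (0:ℝ) < 6 * ak * f 0 := by positivity
  have hsq6 : 0 < Real.sqrt (6 * ak * f 0) := Real.sqrt_pos.mpr h6ak
  have hcpos : 0 < c := by positivity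
  -- nonnegativity of the integrand
  have hFnn : ∀ s₀ : ℝ, 0 < s₀ → ∀ s ∈ Set.Ioi s₀,
      0 ≤ (g s / f s) * (f s₀ / Real.sqrt ((f s) ^ 2 - (f s₀) ^ 2)) := by
    intro s₀ h0 s hs
    have hs' : (0:ℝ) < s := h0.trans hs
    exact mul_nonneg (div_nonneg (hg_pos s hs').le (hfpos s hs'.le).le)
      (div_nonneg (hfpos s₀ h0.le).le (Real.sqrt_nonneg _))
  have nonneg : ∀ s₀ : ℝ, 0 < s₀ →
      0 ≤ ∫ s in Set.Ioi s₀, (g s / f s) * (f s₀ / Real.sqrt ((f s) ^ 2 - (f s₀) ^ 2)) :=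
    fun s₀ h0 => setIntegral_nonneg measurableSet_Ioi (hFnn s₀ h0)
  -- the key lower bound
  have key : ∀ s₀ : ℝ, 0 < s₀ → s₀ < δ →
      c * (Real.log δ - Real.log s₀) ≤
        ∫ s in Set.Ioi s₀, (g s / f s) * (f s₀ / Real.sqrt ((f s) ^ 2 - (f s₀) ^ 2)) := by
    intro s₀ h0 hδs
    have hs₀1 : s₀ < 1 := lt_of_lt_of_le hδs hδ1
    have hs₀2 : s₀ ≤ 2 := by linarith
    set F : ℝ → ℝ := fun s => (g s / f s) * (f s₀ / Real.sqrt ((f s) ^ 2 - (f s₀) ^ 2)) with hFdef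
    have hX : ∀ s : ℝ, s₀ < s → 0 < (f s) ^ 2 - (f s₀) ^ 2 := by
      intro s hs
      have h1 : f s₀ < f s := hmono h0.le (h0.trans hs).le hs
      nlinarith [hfpos s₀ h0.le]
    have hFcont : ContinuousOn F (Set.Ioi s₀) := by
      have hsub : Set.Ioi s₀ ⊆ Set.Ici (0:ℝ) := fun x hx => (h0.trans hx).le
      have hfc : ContinuousOn f (Set.Ioi s₀) := hf_cont.mono hsub
      apply ContinuousOn.mul
      · exact (hg_cont.mono fun x hx => h0.trans hx).div hfc
          (fun x hx => (hfpos x (h0.trans hx).le).ne')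
      · apply ContinuousOn.div continuousOn_const
        · exact Real.continuous_sqrt.comp_continuousOn ((hfc.pow 2).sub continuousOn_const)
        · intro x hx
          exact (Real.sqrt_pos.mpr (hX x hx)).ne'
    -- integrability on (s₀, 2]
    have hA : IntegrableOn F (Set.Ioc s₀ 2) := by
      obtain ⟨xg, hxg, hxgmax⟩ := isCompact_Icc.exists_isMaxOn (Set.nonempty_Icc.mpr hs₀2)
        (hg_cont.mono (fun x hx => lt_of_lt_of_le h0 hx.1))
      obtain ⟨xd, hxd, hxdmin⟩ := isCompact_Icc.exists_isMinOn (Set.nonempty_Icc.mpr hs₀2)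
        (hderiv_cont.mono (fun x hx => lt_of_lt_of_le h0 hx.1))
      have hc₁ : 0 < deriv f xd := hf_deriv xd (lt_of_lt_of_le h0 hxd.1)
      set c₁ : ℝ := deriv f xd with hc₁def
      have hMgnn : 0 ≤ g xg := (hg_pos xg (lt_of_lt_of_le h0 hxg.1)).le
      have hmvt : ∀ s ∈ Set.Icc s₀ 2, c₁ * (s - s₀) ≤ f s - f s₀ := by
        intro s hs
        refine (convex_Icc s₀ 2).mul_sub_le_image_sub_of_le_deriv
          (hf_cont.mono (fun x hx => (h0.trans_le hx.1).le)) ?_ ?_ s₀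
          (Set.left_mem_Icc.mpr hs₀2) s hs hs.1
        · rw [interior_Icc]
          exact fun x hx => ((hanal x (h0.trans hx.1)).differentiableAt).differentiableWithinAt
        · rw [interior_Icc]
          intro x hx
          exact isMinOn_iff.mp hxdmin x ⟨hx.1.le, hx.2.le⟩
      have hsq2f0c₁ : 0 < Real.sqrt (2 * f 0 * c₁) := Real.sqrt_pos.mpr (by positivity)
      set CA : ℝ := g xg / f 0 * f 2 / Real.sqrt (2 * f 0 * c₁) with hCA
      have hDint : IntegrableOn (fun s => CA * (s - s₀) ^ (-(1/2) : ℝ)) (Set.Ioc s₀ 2) := by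
        have h1 : IntervalIntegrable (fun x : ℝ => x ^ (-(1/2) : ℝ)) volume 0 (2 - s₀) :=
          intervalIntegral.intervalIntegrable_rpow' (by norm_num)
        have h2 := h1.comp_sub_right s₀
        rw [zero_add, sub_add_cancel] at h2
        exact ((intervalIntegrable_iff_integrableOn_Ioc_of_le hs₀2).mp h2).const_mul CA
      apply Integrable.mono' hDint
        ((hFcont.mono Set.Ioc_subset_Ioi_self).aestronglyMeasurable measurableSet_Ioc)
      rw [ae_restrict_iff' measurableSet_Ioc]
      refine ae_of_all _ fun s hs => ?_
      have hss₀ : s₀ < s := hs.1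
      have hs2 : s ≤ 2 := hs.2
      have hspos : 0 < s := h0.trans hss₀
      have hgle : g s ≤ g xg := isMaxOn_iff.mp hxgmax s ⟨hss₀.le, hs2⟩
      have hfs0 : f 0 ≤ f s := hf0le s hspos.le
      have hfs₀2 : f s₀ ≤ f 2 := (hmono h0.le (by norm_num) (by linarith)).le
      have hX' : 2 * f 0 * c₁ * (s - s₀) ≤ (f s) ^ 2 - (f s₀) ^ 2 := by
        have h1 : c₁ * (s - s₀) ≤ f s - f s₀ := hmvt s ⟨hss₀.le, hs2⟩
        have h2 : 2 * f 0 ≤ f s + f s₀ := by linarith [hf0le s₀ h0.le]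
        nlinarith [mul_pos hc₁ (sub_pos.mpr hss₀)]
      have hsqrtle : Real.sqrt (2 * f 0 * c₁) * Real.sqrt (s - s₀)
          ≤ Real.sqrt ((f s) ^ 2 - (f s₀) ^ 2) := by
        rw [← Real.sqrt_mul (by positivity)]
        exact Real.sqrt_le_sqrt hX'
      have hsqs : 0 < Real.sqrt (s - s₀) := Real.sqrt_pos.mpr (by linarith)
      rw [Real.norm_eq_abs, abs_of_nonneg (hFnn s₀ h0 s hss₀)]
      have e1 : g s / f s ≤ g xg / f 0 := div_le_div₀ hMgnn hgle hf0 hfs0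
      have e2 : f s₀ / Real.sqrt ((f s) ^ 2 - (f s₀) ^ 2)
          ≤ f 2 / (Real.sqrt (2 * f 0 * c₁) * Real.sqrt (s - s₀)) :=
        div_le_div₀ (hfpos 2 (by norm_num)).le hfs₀2 (by positivity) hsqrtle
      have hrw : (s - s₀) ^ (-(1/2) : ℝ) = (Real.sqrt (s - s₀))⁻¹ := by
        rw [Real.rpow_neg (by linarith : (0:ℝ) ≤ s - s₀), ← Real.sqrt_eq_rpow]
      calc F s ≤ (g xg / f 0) * (f 2 / (Real.sqrt (2 * f 0 * c₁) * Real.sqrt (s - s₀))) := by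
            refine mul_le_mul e1 e2 ?_ (by positivity)
            exact div_nonneg (hfpos s₀ h0.le).le (Real.sqrt_nonneg _)
        _ = CA * (s - s₀) ^ (-(1/2) : ℝ) := by
            rw [hrw, hCA, div_mul_eq_div_div, ← mul_div_assoc,
              mul_div_assoc' (g xg / f 0) (f 2) (Real.sqrt (2 * f 0 * c₁)),
              div_eq_mul_inv (g xg / f 0 * f 2 / Real.sqrt (2 * f 0 * c₁))]
    -- integrability on (2, ∞)
    have hB : IntegrableOn F (Set.Ioi 2) := by
      have hf2pos : (0:ℝ) < f 2 := hfpos 2 (by norm_num)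
      have hf1pos : (0:ℝ) < f 1 := hfpos 1 (by norm_num)
      have hf12 : f 1 < f 2 := hmono (by norm_num) (by norm_num) one_lt_two
      set θ : ℝ := 1 - (f 1 / f 2) ^ 2 with hθ
      have hθpos : 0 < θ := by
        rw [hθ]
        have h2 : f 1 / f 2 < 1 := (div_lt_one hf2pos).mpr hf12
        have h3 : 0 < f 1 / f 2 := div_pos hf1pos hf2pos
        nlinarith
      have hsqθ : 0 < Real.sqrt θ := Real.sqrt_pos.mpr hθpos
      have hdom : IntegrableOn (fun s => (f 1 / Real.sqrt θ) * (g s / (f s) ^ 2))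
          (Set.Ioi 2) := (htail.mono_set (Set.Ioi_subset_Ioi one_le_two)).const_mul _
      apply Integrable.mono' hdom
        ((hFcont.mono (Set.Ioi_subset_Ioi (by linarith))).aestronglyMeasurable measurableSet_Ioi)
      rw [ae_restrict_iff' measurableSet_Ioi]
      refine ae_of_all _ fun s hs => ?_
      have hs2 : (2:ℝ) < s := hs
      have hspos : (0:ℝ) < s := by linarith
      have hss₀ : s₀ < s := by linarith
      have hfspos : 0 < f s := hfpos s hspos.le
      have hfs2 : f 2 ≤ f s := (hmono (by norm_num) hspos.le hs2).le
      have hfs₀1 : f s₀ ≤ f 1 := (hmono h0.le (Set.mem_Ici.mpr zero_le_one) hs₀1).le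
      have hXθ : θ * (f s) ^ 2 ≤ (f s) ^ 2 - (f s₀) ^ 2 := by
        rw [hθ]
        have h1 : (f s₀) ^ 2 ≤ (f 1) ^ 2 := by nlinarith [hfpos s₀ h0.le]
        have key2 : (f 1 / f 2) ^ 2 * (f 2) ^ 2 = (f 1) ^ 2 := by
          field_simp
        have h5 : (f 2) ^ 2 ≤ (f s) ^ 2 := by nlinarith
        nlinarith [mul_le_mul_of_nonneg_left h5 (sq_nonneg (f 1 / f 2))]
      have hsqrtθ : Real.sqrt θ * f s ≤ Real.sqrt ((f s) ^ 2 - (f s₀) ^ 2) := by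
        have h1 : Real.sqrt (θ * (f s) ^ 2) = Real.sqrt θ * f s := by
          rw [Real.sqrt_mul hθpos.le, Real.sqrt_sq hfspos.le]
        rw [← h1]
        exact Real.sqrt_le_sqrt hXθ
      rw [Real.norm_eq_abs, abs_of_nonneg (hFnn s₀ h0 s hss₀)]
      have e2 : f s₀ / Real.sqrt ((f s) ^ 2 - (f s₀) ^ 2) ≤ f 1 / (Real.sqrt θ * f s) :=
        div_le_div₀ hf1pos.le hfs₀1 (by positivity) hsqrtθ
      have hgfnn : 0 ≤ g s / f s := div_nonneg (hg_pos s hspos).le hfspos.le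
      calc F s ≤ (g s / f s) * (f 1 / (Real.sqrt θ * f s)) :=
            mul_le_mul_of_nonneg_left e2 hgfnn
        _ = (f 1 / Real.sqrt θ) * (g s / (f s) ^ 2) := by
            field_simp
    have hInt : IntegrableOn F (Set.Ioi s₀) := by
      rw [← Set.Ioc_union_Ioi_eq_Ioi hs₀2]
      exact hA.union hB
    -- pointwise lower bound on (s₀, δ)
    have hlow : ∀ s ∈ Set.Ioo s₀ δ, c * s⁻¹ ≤ F s := by
      intro s hs
      have hspos : 0 < s := h0.trans hs.1
      obtain ⟨p1, p2, p3⟩ := hPδ s hspos hs.2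
      have hs1 : s ≤ 1 := le_trans hs.2.le hδ1
      have hfs₀0 : f 0 ≤ f s₀ := hf0le s₀ h0.le
      have hskpos : (0:ℝ) < s ^ k := rpow_pos_of_pos hspos k
      have hsk2pos : (0:ℝ) < s ^ (k/2) := rpow_pos_of_pos hspos _
      have hsjpos : (0:ℝ) < s ^ j := rpow_pos_of_pos hspos j
      have hX2 : (f s) ^ 2 - (f s₀) ^ 2 ≤ 6 * ak * f 0 * s ^ k := by
        have h4 : 0 ≤ f s - f 0 := by linarith [hf0le s hspos.le]
        nlinarith [hfpos s₀ h0.le]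
      have hsqrt2 : Real.sqrt ((f s) ^ 2 - (f s₀) ^ 2)
          ≤ Real.sqrt (6 * ak * f 0) * s ^ (k/2) := by
        have h1 : Real.sqrt (6 * ak * f 0 * s ^ k)
            = Real.sqrt (6 * ak * f 0) * s ^ (k/2) := by
          rw [Real.sqrt_mul h6ak.le]
          congr 1
          rw [Real.sqrt_eq_rpow, ← Real.rpow_mul hspos.le, mul_one_div]
        rw [← h1]
        exact Real.sqrt_le_sqrt hX2
      have hsqpos : 0 < Real.sqrt ((f s) ^ 2 - (f s₀) ^ 2) := Real.sqrt_pos.mpr (hX s hs.1)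
      have e1 : (bj / 2 * s ^ j) / (2 * f 0) ≤ g s / f s :=
        div_le_div₀ (hg_pos s hspos).le p2 (hfpos s hspos.le) p3.le
      have e2 : f 0 / (Real.sqrt (6 * ak * f 0) * s ^ (k/2))
          ≤ f s₀ / Real.sqrt ((f s) ^ 2 - (f s₀) ^ 2) :=
        div_le_div₀ (hfpos s₀ h0.le).le hfs₀0 hsqpos hsqrt2
      have e3 : (bj / 2 * s ^ j) / (2 * f 0) * (f 0 / (Real.sqrt (6 * ak * f 0) * s ^ (k/2)))
          ≤ F s := by
        refine mul_le_mul e1 e2 (by positivity) (div_nonneg (hg_pos s hspos).le (hfpos s hspos.le).le)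
      have heq : (bj / 2 * s ^ j) / (2 * f 0) * (f 0 / (Real.sqrt (6 * ak * f 0) * s ^ (k/2)))
          = c * s ^ (j - k/2) := by
        have hsub : s ^ (j - k/2) = s ^ j / s ^ (k/2) := Real.rpow_sub hspos j (k/2)
        rw [hc, hsub]
        field_simp
        ring
      have hexp : s ^ (-1 : ℝ) ≤ s ^ (j - k/2) :=
        rpow_le_rpow_of_exponent_ge hspos hs1 (by linarith)
      calc c * s⁻¹ = c * s ^ (-1 : ℝ) := by rw [Real.rpow_neg_one]
        _ ≤ c * s ^ (j - k/2) := mul_le_mul_of_nonneg_left hexp hcpos.le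
        _ = (bj / 2 * s ^ j) / (2 * f 0) * (f 0 / (Real.sqrt (6 * ak * f 0) * s ^ (k/2))) :=
            heq.symm
        _ ≤ F s := e3
    -- integral comparisons
    have hIline : IntegrableOn (fun s => c * s⁻¹) (Set.Ioo s₀ δ) := by
      apply (ContinuousOn.integrableOn_Icc ?_).mono_set Set.Ioo_subset_Icc_self
      exact continuousOn_const.mul
        (continuousOn_id.inv₀ (fun x hx => (h0.trans_le hx.1).ne'))
    have h₂ : (∫ s in Set.Ioo s₀ δ, c * s⁻¹) ≤ ∫ s in Set.Ioo s₀ δ, F s :=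
      setIntegral_mono_on hIline (hInt.mono_set fun x hx => hx.1) measurableSet_Ioo hlow
    have h₁ : (∫ s in Set.Ioo s₀ δ, F s) ≤ ∫ s in Set.Ioi s₀, F s := by
      refine setIntegral_mono_set hInt ?_ (HasSubset.Subset.eventuallyLE Set.Ioo_subset_Ioi_self)
      filter_upwards [ae_restrict_mem measurableSet_Ioi] with s hs
      exact hFnn s₀ h0 s hs
    have h₃ : (∫ s in Set.Ioo s₀ δ, c * s⁻¹) = c * (Real.log δ - Real.log s₀) := by
      rw [← integral_Ioc_eq_integral_Ioo,
        ← intervalIntegral.integral_of_le (le_of_lt hδs),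
        intervalIntegral.integral_const_mul, integral_inv_of_pos h0 hδpos,
        Real.log_div hδpos.ne' h0.ne']
    calc c * (Real.log δ - Real.log s₀) = ∫ s in Set.Ioo s₀ δ, c * s⁻¹ := h₃.symm
      _ ≤ ∫ s in Set.Ioo s₀ δ, F s := h₂
      _ ≤ ∫ s in Set.Ioi s₀, F s := h₁
  -- conclusion
  have hminor : Tendsto (fun s₀ : ℝ => c * (Real.log δ - Real.log s₀))
      (nhdsWithin 0 (Set.Ioi 0)) atTop := by
    have h1 : Tendsto (fun s₀ : ℝ => Real.log δ - Real.log s₀)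
        (nhdsWithin 0 (Set.Ioi 0)) atTop := by
      have h2 : Tendsto (fun s₀ : ℝ => -Real.log s₀) (nhdsWithin 0 (Set.Ioi 0)) atTop :=
        tendsto_neg_atBot_atTop.comp Real.tendsto_log_nhdsGT_zero
      simpa [sub_eq_add_neg] using tendsto_atTop_add_const_left _ (Real.log δ) h2
    exact h1.const_mul_atTop hcpos
  refine tendsto_atTop_mono' _ ?_ hminor
  filter_upwards [Ioo_mem_nhdsGT_of_mem (Set.left_mem_Ico.mpr hδpos)] with s₀ hs₀
  have h1 := key s₀ hs₀.1 hs₀.2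
  have h2 := nonneg s₀ hs₀.1
  linarith
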